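/- Suppose V⁺ ≠ V⁻. Then there is no trajectory of the standing-wave system for the quantum hydrodynamics model with nonlinear viscosity connecting [V⁻,0] to [V⁺,0]; that is, there is no C² function V : ℝ → (0,∞) satisfying V''(y) = g(V(y))/k² for all y ∈ ℝ together with V(y) → V⁻, V'(y) → 0 as y → -∞ and V(y) → V⁺, V'(y) → 0 as y → +∞. -/

import Mathlib

open Real Filter

/-- Enthalpy: `h(ρ) = ln ρ` if `γ = 1`, `h(ρ) = (γ/(γ-1)) ρ^(γ-1)` if `γ > 1`. -/
noncomputable def enth (γ ρ : ℝ) : ℝ :=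
  if γ = 1 then Real.log ρ else (γ / (γ - 1)) * ρ ^ (γ - 1)

open Set MeasureTheory intervalIntegral

lemma enthInv_hasDerivAt {γ s : ℝ} (hγ : 1 ≤ γ) (hs : 0 < s) :
    HasDerivAt (fun t : ℝ => enth γ t⁻¹) (-γ * s ^ (-γ)) s := by
  rcases eq_or_lt_of_le hγ with h1 | h1
  · subst h1
    have he : (fun t : ℝ => enth 1 t⁻¹) = fun t => -Real.log t := by
      funext t; simp [enth, Real.log_inv]
    rw [he]
    have := (Real.hasDerivAt_log hs.ne').neg
    refine this.congr_deriv ?_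
    rw [Real.rpow_neg_one]; ring
  · have hγ1 : γ ≠ 1 := h1.ne'
    have key : (fun t : ℝ => enth γ t⁻¹) =ᶠ[nhds s] fun t => (γ/(γ-1)) * t ^ (1-γ) := by
      filter_upwards [eventually_gt_nhds hs] with t ht
      simp only [enth, hγ1, if_false]
      rw [Real.inv_rpow ht.le, ← Real.rpow_neg ht.le]
      ring_nf
    have hd : HasDerivAt (fun t : ℝ => (γ/(γ-1)) * t ^ (1-γ)) (-γ * s ^ (-γ)) s := by
      have := (Real.hasDerivAt_rpow_const (x := s) (p := 1-γ) (Or.inl hs.ne')).const_mul (γ/(γ-1))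
      refine this.congr_deriv ?_
      have h2 : (1:ℝ) - γ - 1 = -γ := by ring
      rw [h2]
      have hne : γ - 1 ≠ 0 := sub_ne_zero.mpr hγ1
      field_simp
      ring
    exact hd.congr_of_eventuallyEq key

section phi
variable {γ A B : ℝ}

lemma phi_hasDerivAt (hγ : 1 ≤ γ) {s : ℝ} (hs : 0 < s) :
    HasDerivAt (fun t : ℝ => A/2 * t^2 + enth γ t⁻¹ + B) (A * s + -γ * s ^ (-γ)) s := by
  have h1 : HasDerivAt (fun t : ℝ => A/2 * t^2) (A * s) s := by
    have := ((hasDerivAt_pow 2 s).const_mul (A/2))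
    refine this.congr_deriv ?_; ring
  have := (h1.add (enthInv_hasDerivAt hγ hs)).add_const B
  exact this

lemma phi'_hasDerivAt (hγ : 1 ≤ γ) {s : ℝ} (hs : 0 < s) :
    HasDerivAt (fun t : ℝ => A * t + -γ * t ^ (-γ)) (A + γ^2 * s ^ (-γ - 1)) s := by
  have h1 : HasDerivAt (fun t : ℝ => A * t) A s := by
    simpa using (hasDerivAt_id s).const_mul A
  have h2 := (Real.hasDerivAt_rpow_const (x := s) (p := -γ) (Or.inl hs.ne')).const_mul (-γ)
  have := h1.add h2
  refine this.congr_deriv ?_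
  ring

lemma phi_strictConvexOn (hγ : 1 ≤ γ) (hA : 0 ≤ A) :
    StrictConvexOn ℝ (Ioi (0:ℝ)) (fun t : ℝ => A/2 * t^2 + enth γ t⁻¹ + B) := by
  apply strictConvexOn_of_deriv2_pos (convex_Ioi 0)
  · exact fun s hs => ((phi_hasDerivAt hγ hs).continuousAt).continuousWithinAt
  · intro s hs
    rw [interior_Ioi] at hs
    have heq : deriv (fun t : ℝ => A/2 * t^2 + enth γ t⁻¹ + B)
        =ᶠ[nhds s] fun t : ℝ => A * t + -γ * t ^ (-γ) := by
      filter_upwards [isOpen_Ioi.mem_nhds hs] with t ht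
      exact (phi_hasDerivAt hγ ht).deriv
    have h2 : deriv^[2] (fun t : ℝ => A/2 * t^2 + enth γ t⁻¹ + B) s
        = A + γ^2 * s ^ (-γ - 1) := by
      show deriv (deriv _) s = _
      rw [heq.deriv_eq]
      exact (phi'_hasDerivAt hγ hs).deriv
    rw [h2]
    have : 0 < γ^2 * s ^ (-γ - 1) :=
      mul_pos (by positivity) (Real.rpow_pos_of_pos hs _)
    linarith

lemma strictConvexOn_neg_between {f : ℝ → ℝ} (hf : StrictConvexOn ℝ (Ioi (0:ℝ)) f)
    {a b x : ℝ} (ha : 0 < a) (hab : a < b) (hfa : f a = 0) (hfb : f b = 0)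
    (hx : x ∈ Ioo a b) : f x < 0 := by
  obtain ⟨hax, hxb⟩ := hx
  have hba : 0 < b - a := by linarith
  set t := (b - x)/(b - a) with htdef
  set u := (x - a)/(b - a) with hudef
  have ht : 0 < t := div_pos (by linarith) hba
  have hu : 0 < u := div_pos (by linarith) hba
  have htu : t + u = 1 := by rw [htdef, hudef]; field_simp; ring
  have hxc : t • a + u • b = x := by
    simp only [smul_eq_mul, htdef, hudef]; field_simp; ring
  have := hf.2 (show a ∈ Ioi (0:ℝ) from ha) (show b ∈ Ioi (0:ℝ) by exact lt_trans ha hab)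
    (ne_of_lt hab) ht hu htu
  rw [hxc, hfa, hfb] at this
  simp only [smul_eq_mul, mul_zero, add_zero] at this
  exact this

end phi

/-- Non-existence of heteroclinic connections for the standing-wave system of the
QHD model with nonlinear viscosity, when `V⁺ ≠ V⁻`. -/
theorem no_heteroclinic_nonlinear_viscosity
    (γ k Vp Vm up um : ℝ)
    (hγ : 1 ≤ γ) (hk : 0 < k) (hVp : 0 < Vp) (hVm : 0 < Vm)
    (hRH1 : Vp ^ 2 * up = Vm ^ 2 * um)
    (hRH2 : up ^ 2 / 2 + enth γ (Vp ^ 2) = um ^ 2 / 2 + enth γ (Vm ^ 2))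
    (hne : Vp ≠ Vm)
    (C₁ C₂ : ℝ) (hC₁ : C₁ = -up * Vp ^ 2)
    (hC₂ : C₂ = -up ^ 2 / 2 - enth γ (Vp ^ 2))
    (g : ℝ → ℝ)
    (hg : ∀ V : ℝ, 0 < V → g V = (C₁ ^ 2 / (2 * V ^ 4) + enth γ (V ^ 2) + C₂) * V) :
    ¬ ∃ V : ℝ → ℝ, ContDiff ℝ 2 V ∧ (∀ y, 0 < V y) ∧
      (∀ y, deriv (deriv V) y = g (V y) / k ^ 2) ∧
      Tendsto V atBot (nhds Vm) ∧ Tendsto (deriv V) atBot (nhds 0) ∧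
      Tendsto V atTop (nhds Vp) ∧ Tendsto (deriv V) atTop (nhds 0) := by
  rintro ⟨V, hV2, hpos, hODE, hVmB, hDB, hVpT, hDT⟩
  set φ : ℝ → ℝ := fun s => C₁^2/2 * s^2 + enth γ s⁻¹ + C₂ with hφdef
  -- zeros of φ
  have hsp : φ ((Vp^2)⁻¹) = 0 := by
    have h1 : C₁^2/2 * ((Vp^2)⁻¹)^2 = up^2/2 := by
      rw [hC₁]; field_simp
    simp only [hφdef, inv_inv, h1, hC₂]
    ring
  have hsm : φ ((Vm^2)⁻¹) = 0 := by
    have hsq : (Vp^2 * up)^2 = (Vm^2 * um)^2 := by rw [hRH1]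
    have h1 : C₁^2/2 * ((Vm^2)⁻¹)^2 = um^2/2 := by
      have hC1sq : C₁^2 = um^2 * Vm^4 := by
        rw [hC₁]; nlinarith [hsq]
      rw [hC1sq]; field_simp
    have h2 : enth γ (Vm^2) + C₂ = -um^2/2 := by rw [hC₂]; linarith
    simp only [hφdef, inv_inv]
    linarith [h1, h2]
  -- g in terms of φ
  have hgφ : ∀ t : ℝ, 0 < t → g t = φ ((t^2)⁻¹) * t := by
    intro t ht
    rw [hg t ht]
    simp only [hφdef, inv_inv]
    congr 1
    field_simp
  -- strict convexity and negativity of φ between its zeros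
  have hconv : StrictConvexOn ℝ (Ioi (0:ℝ)) φ :=
    phi_strictConvexOn hγ (sq_nonneg C₁)
  -- continuity of g on (0, ∞)
  have hφc : ContinuousOn φ (Ioi (0:ℝ)) :=
    fun s hs => ((phi_hasDerivAt (A := C₁^2) (B := C₂) hγ hs).continuousAt).continuousWithinAt
  have hgc : ContinuousOn g (Ioi (0:ℝ)) := by
    have hmap : MapsTo (fun t : ℝ => (t^2)⁻¹) (Ioi 0) (Ioi (0:ℝ)) := by
      intro t ht; exact inv_pos.mpr (pow_pos (a := t) ht 2)
    have hc1 : ContinuousOn (fun t : ℝ => (t^2)⁻¹) (Ioi 0) := by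
      apply ContinuousOn.inv₀ (by fun_prop)
      intro t ht; exact (pow_pos ht 2).ne'
    have : ContinuousOn (fun t : ℝ => φ ((t^2)⁻¹) * t) (Ioi 0) :=
      (hφc.comp hc1 hmap).mul continuousOn_id
    exact this.congr fun t ht => hgφ t ht
  -- the potential G
  set G : ℝ → ℝ := fun x => ∫ t in Vm..x, g t with hGdef
  have hGd : ∀ x : ℝ, 0 < x → HasDerivAt G (g x) x := by
    intro x hx
    have hsub : Set.uIcc Vm x ⊆ Ioi (0:ℝ) := by
      intro t ht
      exact lt_of_lt_of_le (lt_min hVm hx) ht.1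
    exact integral_hasDerivAt_right ((hgc.mono hsub).intervalIntegrable)
      (hgc.stronglyMeasurableAtFilter isOpen_Ioi x hx)
      (hgc.continuousAt (isOpen_Ioi.mem_nhds hx))
  -- derivatives of V
  have hVdiff : Differentiable ℝ V := hV2.differentiable (by norm_num)
  have hV1 : ContDiff ℝ 1 (deriv V) := by
    have := (contDiff_succ_iff_deriv (n := 1)).mp (by exact_mod_cast hV2)
    exact this.2.2
  have hD2 : ∀ y, HasDerivAt (deriv V) (g (V y) / k^2) y := by
    intro y
    have := ((hV1.differentiable one_ne_zero) y).hasDerivAt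
    rwa [hODE y] at this
  -- energy
  set E : ℝ → ℝ := fun y => (deriv V y)^2/2 - G (V y)/k^2 with hEdef
  have hE0 : ∀ y, HasDerivAt E 0 y := by
    intro y
    have h1 := ((hD2 y).pow 2).div_const 2
    have h2 : HasDerivAt (fun y => G (V y)) (g (V y) * deriv V y) y :=
      (hGd (V y) (hpos y)).comp y ((hVdiff y).hasDerivAt)
    have := h1.sub (h2.div_const (k^2))
    refine this.congr_deriv ?_
    have hk2 : (k:ℝ)^2 ≠ 0 := by positivity
    push_cast
    field_simp
    ring
  have hconst : ∀ x y : ℝ, E x = E y :=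
    is_const_of_deriv_eq_zero (fun y => (hE0 y).differentiableAt) (fun y => (hE0 y).deriv)
  -- limits of the energy
  have hEconst : Tendsto E atBot (nhds (E 0)) ∧ Tendsto E atTop (nhds (E 0)) := by
    have : E = fun _ => E 0 := funext fun y => hconst y 0
    rw [this]; exact ⟨tendsto_const_nhds, tendsto_const_nhds⟩
  have hlim : ∀ (l : Filter ℝ) (W : ℝ), l.NeBot → 0 < W →
      Tendsto V l (nhds W) → Tendsto (deriv V) l (nhds 0) →
      Tendsto E l (nhds (E 0)) → E 0 = -(G W/k^2) := by
    intro l W hne hW hVl hDl hEl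
    have t1 : Tendsto E l (nhds ((0:ℝ)^2/2 - G W/k^2)) := by
      exact ((hDl.pow 2).div_const 2).sub
        ((((hGd W hW).continuousAt.tendsto).comp hVl).div_const (k^2))
    have := tendsto_nhds_unique hEl t1
    rw [this]; norm_num
  have hEm := hlim atBot Vm (by infer_instance) hVm hVmB hDB hEconst.1
  have hEp := hlim atTop Vp (by infer_instance) hVp hVpT hDT hEconst.2
  have hGG : G Vm = G Vp := by
    have hk2 : (k:ℝ)^2 ≠ 0 := by positivity
    have : G Vm / k^2 = G Vp / k^2 := by rw [hEm] at hEp; linarith [hEp]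
    field_simp at this
    exact this
  have hGm : G Vm = 0 := by simp [hGdef]
  have hint : (∫ t in Vm..Vp, g t) = 0 := by
    have : G Vp = 0 := by rw [← hGG, hGm]
    simpa [hGdef] using this
  -- negativity of g strictly between Vm and Vp
  set a := min Vm Vp with hadef
  set b := max Vm Vp with hbdef
  have ha0 : 0 < a := lt_min hVm hVp
  have hab : a < b := min_lt_max.mpr (Ne.symm hne)
  have hZa : φ ((b^2)⁻¹) = 0 ∧ φ ((a^2)⁻¹) = 0 := by
    rcases le_total Vm Vp with h | h
    · rw [hadef, hbdef, min_eq_left h, max_eq_right h]; exact ⟨hsp, hsm⟩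
    · rw [hadef, hbdef, min_eq_right h, max_eq_left h]; exact ⟨hsm, hsp⟩
  have hgneg : ∀ t ∈ Ioo a b, g t < 0 := by
    intro t ht
    have ht0 : 0 < t := ha0.trans ht.1
    rw [hgφ t ht0]
    apply mul_neg_of_neg_of_pos _ ht0
    have hsab : (b^2)⁻¹ < (a^2)⁻¹ := by
      apply inv_strictAnti₀ (by positivity)
      exact pow_lt_pow_left₀ hab ha0.le (by norm_num)
    apply strictConvexOn_neg_between hconv (by positivity) hsab hZa.1 hZa.2
    constructor
    · exact inv_strictAnti₀ (by positivity) (pow_lt_pow_left₀ ht.2 ht0.le (by norm_num))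
    · exact inv_strictAnti₀ (by positivity) (pow_lt_pow_left₀ ht.1 ha0.le (by norm_num))
  -- contradiction via strict positivity of the integral of -g
  have hsub : Set.uIcc a b ⊆ Ioi (0:ℝ) := fun t ht => lt_of_lt_of_le (by
    rw [min_eq_left hab.le]; exact ha0) ht.1
  have hinteg : IntervalIntegrable g volume a b := (hgc.mono hsub).intervalIntegrable
  have hposint : 0 < ∫ t in a..b, -g t :=
    intervalIntegral_pos_of_pos_on hinteg.neg (fun t ht => neg_pos.mpr (hgneg t ht)) hab
  have hintab : (∫ t in a..b, g t) = 0 := by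
    rcases le_total Vm Vp with h | h
    · rw [hadef, hbdef, min_eq_left h, max_eq_right h]; exact hint
    · rw [hadef, hbdef, min_eq_right h, max_eq_left h]
      rw [intervalIntegral.integral_symm] at hint
      linarith [hint]
  rw [intervalIntegral.integral_neg, hintab] at hposint
  simp at hposint
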